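/- Let V be an odd-dimensional real inner product space and let F be a commuting family of skew-symmetric endomorphisms of V. Then there exists a nonzero vector Z in V annihilated by every element of F. -/

import Mathlib

open Module

section Aux

variable {V : Type*} [NormedAddCommGroup V] [InnerProductSpace ℝ V] [FiniteDimensional ℝ V]

lemma skew_adjoint_eq' (A : V →ₗ[ℝ] V)
    (h : ∀ x y : V, (inner ℝ (A x) y : ℝ) = -(inner ℝ x (A y) : ℝ)) :
    LinearMap.adjoint A = -A := by
  symm
  rw [LinearMap.eq_adjoint_iff]
  intro x y
  simp [h x y]

lemma det_adjoint' (A : V →ₗ[ℝ] V) :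
    LinearMap.det (LinearMap.adjoint A) = LinearMap.det A := by
  let b := stdOrthonormalBasis ℝ V
  rw [← LinearMap.det_toMatrix b.toBasis (LinearMap.adjoint A),
    ← LinearMap.det_toMatrix b.toBasis A, LinearMap.toMatrix_adjoint b b,
    Matrix.det_conjTranspose]
  simp

lemma skew_ker_ne_bot (hodd : Odd (finrank ℝ V)) (A : V →ₗ[ℝ] V)
    (h : ∀ x y : V, (inner ℝ (A x) y : ℝ) = -(inner ℝ x (A y) : ℝ)) :
    LinearMap.ker A ≠ ⊥ := by
  have hdet : LinearMap.det A = 0 := by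
    have h1 : LinearMap.det (-A) = LinearMap.det A := by
      rw [← skew_adjoint_eq' A h, det_adjoint']
    have h2 : (-A : V →ₗ[ℝ] V) = (-1 : ℝ) • A := by ext x; simp
    rw [h2, LinearMap.det_smul, hodd.neg_one_pow] at h1
    linarith
  exact (LinearMap.bot_lt_ker_of_det_eq_zero hdet).ne'

end Aux

universe u

theorem aux_stmt : ∀ (n : ℕ) (V : Type u) [NormedAddCommGroup V] [InnerProductSpace ℝ V]
    [FiniteDimensional ℝ V], finrank ℝ V = n → Odd n →
    ∀ F : Set (V →ₗ[ℝ] V),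
    (∀ A ∈ F, ∀ x y : V, (inner ℝ (A x) y : ℝ) = -(inner ℝ x (A y) : ℝ)) →
    (∀ A ∈ F, ∀ B ∈ F, A ∘ₗ B = B ∘ₗ A) →
    ∃ Z : V, Z ≠ 0 ∧ ∀ A ∈ F, A Z = 0 := by
  intro n
  induction n using Nat.strong_induction_on with
  | _ n ih =>
  intro V _ _ _ hn hodd F hskew hcomm
  by_cases hz : ∀ A ∈ F, A = (0 : V →ₗ[ℝ] V)
  · have hpos : 0 < finrank ℝ V := by
      rw [hn]; rcases hodd with ⟨k, rfl⟩; omega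
    have : Nontrivial V := nontrivial_of_finrank_pos hpos
    obtain ⟨Z, hZ⟩ := exists_ne (0 : V)
    exact ⟨Z, hZ, fun A hA => by rw [hz A hA]; rfl⟩
  · push_neg at hz
    obtain ⟨A, hAF, hA0⟩ := hz
    set K := LinearMap.ker A with hK
    have hskewA := hskew A hAF
    have hrange_le : LinearMap.range A ≤ Kᗮ := by
      rintro _ ⟨y, rfl⟩
      rw [Submodule.mem_orthogonal]
      intro x hx
      have hx0 : A x = 0 := hx
      have := hskewA x y
      rw [hx0] at this
      simp at this
      linarith [this]
    have hdims : finrank ℝ K + finrank ℝ Kᗮ = n := by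
      rw [← hn]; exact Submodule.finrank_add_finrank_orthogonal K
    have hrk := LinearMap.finrank_range_add_finrank_ker A
    have hrankeq : finrank ℝ (LinearMap.range A) = finrank ℝ Kᗮ := by
      rw [hn, ← hK] at hrk; omega
    have hrange : LinearMap.range A = Kᗮ :=
      Submodule.eq_of_le_of_finrank_eq hrange_le hrankeq
    have hinvW : ∀ x ∈ Kᗮ, A x ∈ Kᗮ := fun x _ => hrange ▸ LinearMap.mem_range_self A x
    set A' := A.restrict hinvW with hA'
    have hA'skew : ∀ x y : Kᗮ, (inner ℝ (A' x) y : ℝ) = -(inner ℝ x (A' y) : ℝ) := by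
      intro x y
      simp only [hA', Submodule.coe_inner, LinearMap.restrict_apply]
      exact hskewA x y
    have hA'inj : LinearMap.ker A' = ⊥ := by
      rw [LinearMap.ker_eq_bot]
      intro x y hxy
      have h1 : A (x : V) = A (y : V) := congrArg Subtype.val hxy
      have h2 : (x : V) - y ∈ K := by
        simp [hK, LinearMap.mem_ker, map_sub, h1]
      have h3 : (x : V) - y ∈ Kᗮ := Submodule.sub_mem _ x.2 y.2
      have h4 : (x : V) - y = 0 := by
        have := Submodule.inner_right_of_mem_orthogonal h2 h3
        rwa [inner_self_eq_zero] at this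
      exact Subtype.ext (sub_eq_zero.mp h4)
    have heven : Even (finrank ℝ Kᗮ) := by
      by_contra hodd'
      rw [Nat.not_even_iff_odd] at hodd'
      exact skew_ker_ne_bot hodd' A' hA'skew hA'inj
    have hKne : K ≠ ⊤ := fun h => hA0 (LinearMap.ker_eq_top.mp h)
    have hKlt : finrank ℝ K < n := by
      rw [← hn]; exact Submodule.finrank_lt hKne
    have hKodd : Odd (finrank ℝ K) := by
      have : finrank ℝ K = n - finrank ℝ Kᗮ := by omega
      rw [this]
      exact Nat.Odd.sub_even (by omega) hodd heven
    have hinvK : ∀ B ∈ F, ∀ x ∈ K, B x ∈ K := by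
      intro B hB x hx
      have hcAB := hcomm A hAF B hB
      have hx0 : A x = 0 := hx
      have : A (B x) = B (A x) := by
        rw [← LinearMap.comp_apply, hcAB, LinearMap.comp_apply]
      show A (B x) = 0
      rw [this, hx0, map_zero]
    set F' : Set (↥K →ₗ[ℝ] ↥K) :=
      {C | ∃ B, ∃ hB : B ∈ F, C = B.restrict (fun x hx => hinvK B hB x hx)} with hF'
    have hskew' : ∀ C ∈ F', ∀ x y : K, (inner ℝ (C x) y : ℝ) = -(inner ℝ x (C y) : ℝ) := by
      rintro C ⟨B, hB, rfl⟩ x y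
      simp only [Submodule.coe_inner, LinearMap.restrict_apply]
      exact hskew B hB x y
    have hcomm' : ∀ C ∈ F', ∀ D ∈ F', C ∘ₗ D = D ∘ₗ C := by
      rintro C ⟨B, hB, rfl⟩ D ⟨B', hB', rfl⟩
      ext x
      have := LinearMap.ext_iff.mp (hcomm B hB B' hB') (x : V)
      simp only [LinearMap.comp_apply] at this ⊢
      simp only [LinearMap.restrict_coe_apply]
      exact this
    obtain ⟨Z, hZne, hZ0⟩ := ih (finrank ℝ K) hKlt ↥K rfl hKodd F' hskew' hcomm'
    refine ⟨(Z : V), by simpa using hZne, ?_⟩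
    intro B hB
    have hmem : B.restrict (fun x hx => hinvK B hB x hx) ∈ F' := ⟨B, hB, rfl⟩
    have := hZ0 _ hmem
    have := congrArg Subtype.val this
    simpa [LinearMap.restrict_apply] using this

/-- On an odd-dimensional real inner product space, a commuting family of
skew-symmetric endomorphisms has a common nonzero kernel vector. -/
theorem stmt0 {V : Type*} [NormedAddCommGroup V] [InnerProductSpace ℝ V]
    [FiniteDimensional ℝ V] (hodd : Odd (Module.finrank ℝ V))
    (F : Set (V →ₗ[ℝ] V))
    (hskew : ∀ A ∈ F, ∀ x y : V, (inner ℝ (A x) y : ℝ) = -(inner ℝ x (A y) : ℝ))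
    (hcomm : ∀ A ∈ F, ∀ B ∈ F, A ∘ₗ B = B ∘ₗ A) :
    ∃ Z : V, Z ≠ 0 ∧ ∀ A ∈ F, A Z = 0 := by
  exact aux_stmt (finrank ℝ V) V rfl hodd F hskew hcomm
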